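/- Let τ_max > L_α/R_α for every line α ∈ E. Let (i, v) : I → ℝ^E × ℝ^V be a differentiable solution of the network dynamics on an open interval I, with v_k(t) = V0 at sources and v_k(t) > 0 at loads for all t ∈ I. Define P(t) = G(v(t)) + Σ_{α∈E} ((τ_max − τ_α)/2)·L_α·(i_α'(t))² + (τ_max/2)·Σ_{k∈L} C_k·(v_k'(t))², with the derivatives expressed through the state via the dynamics. Then P is differentiable on I and P'(t) = −Σ_{α∈E} R_α·(τ_max − τ_α)·(i_α'(t))² − Σ_{k∈L} (C_k − τ_max·p_k/v_k(t)²)·(v_k'(t))². -/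

import Mathlib

open Finset

/-- Full voltage profile on buses `S ⊕ L`: every source bus is held at `V0`,
load bus `k` is at `vL k`. -/
def fullV {S L : Type*} (V0 : ℝ) (vL : L → ℝ) : S ⊕ L → ℝ :=
  Sum.elim (fun _ => V0) vL

/-- Resistive co-content
`G(v) = Σ_α (v_{α₁} - v_{α₂})²/(2 R_α) + Σ_k p_k log v_k`. -/
noncomputable def cocontent {S L E : Type*} [Fintype L] [Fintype E]
    (e1 e2 : E → S ⊕ L) (R : E → ℝ) (p : L → ℝ) (V0 : ℝ) (vL : L → ℝ) : ℝ :=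
  (∑ α, (fullV (S := S) V0 vL (e1 α) - fullV (S := S) V0 vL (e2 α)) ^ 2 / (2 * R α))
    + ∑ k, p k * Real.log (vL k)

/-- There is a path of lines (each traversed in either direction) joining the
load bus `k` to some source bus, whose total resistance is at most `Rmax`. -/
def pathToSource {S L E : Type*} [Fintype E]
    (e1 e2 : E → S ⊕ L) (R : E → ℝ) (Rmax : ℝ) (k : L) : Prop :=
  ∃ (n : ℕ) (b : Fin (n + 1) → S ⊕ L) (ed : Fin n → E),
    b 0 = Sum.inr k ∧ (∃ s : S, b (Fin.last n) = Sum.inl s) ∧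
    (∀ i : Fin n,
      (e1 (ed i) = b i.castSucc ∧ e2 (ed i) = b i.succ) ∨
      (e1 (ed i) = b i.succ ∧ e2 (ed i) = b i.castSucc)) ∧
    (∑ i, R (ed i)) ≤ Rmax

/-- `vL` is a critical point of the co-content `G` with respect to the load
voltages: all load voltages are positive and `∂G/∂v_k = 0` for every load `k`. -/
noncomputable def isCritPt {S L E : Type*} [Fintype E] [Fintype L]
    [DecidableEq S] [DecidableEq L]
    (e1 e2 : E → S ⊕ L) (R : E → ℝ) (p : L → ℝ) (V0 : ℝ) (vL : L → ℝ) : Prop :=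
  (∀ k, 0 < vL k) ∧
  ∀ k : L,
    (∑ α, ((if e1 α = Sum.inr k then (1 : ℝ) else 0)
        - (if e2 α = Sum.inr k then 1 else 0))
      * (fullV (S := S) V0 vL (e1 α) - fullV (S := S) V0 vL (e2 α)) / R α)
    + p k / vL k = 0

/-- High-voltage solution of `v (V0 - v) = R p`. -/
noncomputable def Vhigh (V0 R p : ℝ) : ℝ :=
  V0 / 2 * (1 + Real.sqrt (1 - p / (V0 ^ 2 / (4 * R))))

/-- Low-voltage solution of `v (V0 - v) = R p`. -/
noncomputable def Vlow (V0 R p : ℝ) : ℝ :=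
  V0 / 2 * (1 - Real.sqrt (1 - p / (V0 ^ 2 / (4 * R))))

/-- Line-current derivative expressed through the state:
`di_α/dt = (-R_α i_α + v_{α₁} - v_{α₂}) / L_α`. -/
noncomputable def idotF {S L E : Type*} (e1 e2 : E → S ⊕ L) (R Lind : E → ℝ)
    (V0 : ℝ) (i : E → ℝ) (vL : L → ℝ) (α : E) : ℝ :=
  (-R α * i α + fullV (S := S) V0 vL (e1 α) - fullV (S := S) V0 vL (e2 α)) / Lind α

/-- Load-voltage derivative expressed through the state:
`dv_k/dt = (-p_k/v_k - (net current leaving bus k)) / C_k`. -/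
noncomputable def vdotF {S L E : Type*} [Fintype E] [DecidableEq S] [DecidableEq L]
    (e1 e2 : E → S ⊕ L) (C p : L → ℝ) (i : E → ℝ) (vL : L → ℝ) (k : L) : ℝ :=
  (-(p k / vL k)
    - ∑ α, ((if e1 α = Sum.inr k then (1 : ℝ) else 0)
        - (if e2 α = Sum.inr k then 1 else 0)) * i α) / C k

/-- Brayton–Moser potential
`P(x) = G(v) + Σ_α ((τmax - τ_α)/2) L_α (di_α/dt)² + (τmax/2) Σ_k C_k (dv_k/dt)²`,
with the time derivatives expressed through the state via the dynamics. -/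
noncomputable def BMpot {S L E : Type*} [Fintype L] [Fintype E]
    [DecidableEq S] [DecidableEq L]
    (e1 e2 : E → S ⊕ L) (R Lind : E → ℝ) (C p : L → ℝ) (V0 τmax : ℝ)
    (i : E → ℝ) (vL : L → ℝ) : ℝ :=
  cocontent e1 e2 R p V0 vL
    + (∑ α, (τmax - Lind α / R α) / 2 * Lind α * (idotF e1 e2 R Lind V0 i vL α) ^ 2)
    + τmax / 2 * ∑ k, C k * (vdotF e1 e2 C p i vL k) ^ 2

/-- Along a differentiable solution of the network dynamics on an open
interval, with source voltages fixed at `V0` and positive load voltages,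
the Brayton–Moser potential `P` (with derivatives expressed through the
state) is differentiable with
`P' = -Σ_α R_α (τmax - τ_α) (i_α')² - Σ_k (C_k - τmax p_k / v_k²) (v_k')²`. -/
theorem stmt_8 {S L E : Type*} [Fintype S] [Fintype L] [Fintype E]
    [DecidableEq S] [DecidableEq L]
    (e1 e2 : E → S ⊕ L) (R Lind : E → ℝ)
    (hR : ∀ α, 0 < R α) (hL : ∀ α, 0 < Lind α)
    (C p : L → ℝ) (hC : ∀ k, 0 < C k) (hp : ∀ k, 0 ≤ p k)
    (V0 τmax : ℝ) (hV0 : 0 < V0) (hτmax : ∀ α, Lind α / R α < τmax)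
    (a b : ℝ) (i : ℝ → E → ℝ) (v : ℝ → L → ℝ)
    (hpos : ∀ t ∈ Set.Ioo a b, ∀ k, 0 < v t k)
    (hidyn : ∀ t ∈ Set.Ioo a b, ∀ α,
      HasDerivAt (fun s => i s α) (idotF e1 e2 R Lind V0 (i t) (v t) α) t)
    (hvdyn : ∀ t ∈ Set.Ioo a b, ∀ k,
      HasDerivAt (fun s => v s k) (vdotF e1 e2 C p (i t) (v t) k) t) :
    ∀ t ∈ Set.Ioo a b,
      HasDerivAt (fun s => BMpot e1 e2 R Lind C p V0 τmax (i s) (v s))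
        (-(∑ α, R α * (τmax - Lind α / R α) * (idotF e1 e2 R Lind V0 (i t) (v t) α) ^ 2)
          - ∑ k, (C k - τmax * p k / (v t k) ^ 2) * (vdotF e1 e2 C p (i t) (v t) k) ^ 2)
        t := by

  intro t ht
  have hR' : ∀ α, R α ≠ 0 := fun α => (hR α).ne'
  have hL' : ∀ α, Lind α ≠ 0 := fun α => (hL α).ne'
  have hC' : ∀ k, C k ≠ 0 := fun k => (hC k).ne'
  have hv' : ∀ k, v t k ≠ 0 := fun k => (hpos t ht k).ne'
  set iDt : E → ℝ := idotF e1 e2 R Lind V0 (i t) (v t) with hiDtdef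
  set u : L → ℝ := vdotF e1 e2 C p (i t) (v t) with hudef
  set D : E → ℝ := fun α => Sum.elim (fun _ => (0:ℝ)) u (e1 α)
      - Sum.elim (fun _ => (0:ℝ)) u (e2 α) with hDdef
  set Δ : E → ℝ := fun α => fullV (S := S) V0 (v t) (e1 α)
      - fullV (S := S) V0 (v t) (e2 α) with hΔdef
  -- derivative of a bus voltage
  have hfull : ∀ c : S ⊕ L, HasDerivAt (fun s => fullV (S := S) V0 (v s) c)
      (Sum.elim (fun _ => (0:ℝ)) u c) t := by
    rintro (s0 | k)
    · simpa [fullV] using hasDerivAt_const t V0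
    · simpa [fullV] using hvdyn t ht k
  have hΔ' : ∀ α, HasDerivAt
      (fun s => fullV (S := S) V0 (v s) (e1 α) - fullV (S := S) V0 (v s) (e2 α))
      (D α) t := fun α => (hfull (e1 α)).sub (hfull (e2 α))
  have hiDt' : ∀ α, HasDerivAt (fun s => idotF e1 e2 R Lind V0 (i s) (v s) α)
      ((-R α * iDt α + D α) / Lind α) t := by
    intro α
    have h := ((((hidyn t ht α).const_mul (-R α)).add (hfull (e1 α))).sub
      (hfull (e2 α))).div_const (Lind α)
    simp only [idotF]
    refine h.congr_deriv ?_
    simp only [hDdef]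
    ring
  have hu' : ∀ k, HasDerivAt (fun s => vdotF e1 e2 C p (i s) (v s) k)
      ((p k * u k / (v t k) ^ 2
        - ∑ α, ((if e1 α = Sum.inr k then (1:ℝ) else 0)
            - if e2 α = Sum.inr k then 1 else 0) * iDt α) / C k) t := by
    intro k
    have hsum : HasDerivAt (fun s => ∑ α, ((if e1 α = Sum.inr k then (1:ℝ) else 0)
        - if e2 α = Sum.inr k then 1 else 0) * i s α)
        (∑ α, ((if e1 α = Sum.inr k then (1:ℝ) else 0)
        - if e2 α = Sum.inr k then 1 else 0) * iDt α) t :=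
      HasDerivAt.fun_sum fun α _ => (hidyn t ht α).const_mul _
    have hdiv : HasDerivAt (fun s => p k / v s k)
        ((0 * v t k - p k * u k) / (v t k) ^ 2) t :=
      (hasDerivAt_const t (p k)).div (hvdyn t ht k) (hv' k)
    have h := (hdiv.neg.sub hsum).div_const (C k)
    simp only [vdotF]
    refine h.congr_deriv ?_
    field_simp
    ring
  -- the four pieces of the potential
  have h1 : HasDerivAt (fun s => ∑ α,
      (fullV (S := S) V0 (v s) (e1 α) - fullV (S := S) V0 (v s) (e2 α)) ^ 2 / (2 * R α))
      (∑ α, Δ α * D α / R α) t := by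
    refine HasDerivAt.fun_sum fun α _ => ?_
    have h := ((hΔ' α).pow 2).div_const (2 * R α)
    refine h.congr_deriv ?_
    simp only [hΔdef]
    field_simp
    ring
  have h2 : HasDerivAt (fun s => ∑ k, p k * Real.log (v s k))
      (∑ k, p k * (u k / v t k)) t :=
    HasDerivAt.fun_sum fun k _ => ((hvdyn t ht k).log (hv' k)).const_mul (p k)
  have h3 : HasDerivAt (fun s => ∑ α,
      (τmax - Lind α / R α) / 2 * Lind α * (idotF e1 e2 R Lind V0 (i s) (v s) α) ^ 2)
      (∑ α, (τmax - Lind α / R α) * (iDt α * (-R α * iDt α + D α))) t := by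
    refine HasDerivAt.fun_sum fun α _ => ?_
    have h := ((hiDt' α).pow 2).const_mul ((τmax - Lind α / R α) / 2 * Lind α)
    refine h.congr_deriv ?_
    have hLa := hL' α
    have hRa := hR' α
    field_simp
    ring
  have h4 : HasDerivAt (fun s => τmax / 2 * ∑ k, C k * (vdotF e1 e2 C p (i s) (v s) k) ^ 2)
      (τmax * ∑ k, u k * (p k * u k / (v t k) ^ 2
        - ∑ α, ((if e1 α = Sum.inr k then (1:ℝ) else 0)
            - if e2 α = Sum.inr k then 1 else 0) * iDt α)) t := by
    have hsum4 : HasDerivAt (fun s => ∑ k, C k * (vdotF e1 e2 C p (i s) (v s) k) ^ 2)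
        (∑ k, C k * (2 * u k * ((p k * u k / (v t k) ^ 2
          - ∑ α, ((if e1 α = Sum.inr k then (1:ℝ) else 0)
              - if e2 α = Sum.inr k then 1 else 0) * iDt α) / C k))) t := by
      refine HasDerivAt.fun_sum fun k _ => ?_
      have h := ((hu' k).pow 2).const_mul (C k)
      refine h.congr_deriv ?_
      ring
    have h := hsum4.const_mul (τmax / 2)
    refine h.congr_deriv ?_
    rw [Finset.mul_sum, Finset.mul_sum]
    refine Finset.sum_congr rfl fun k _ => ?_
    have hCk := hC' k
    field_simp
  have hP : HasDerivAt (fun s => BMpot e1 e2 R Lind C p V0 τmax (i s) (v s))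
      (((∑ α, Δ α * D α / R α) + ∑ k, p k * (u k / v t k))
        + (∑ α, (τmax - Lind α / R α) * (iDt α * (-R α * iDt α + D α)))
        + τmax * ∑ k, u k * (p k * u k / (v t k) ^ 2
            - ∑ α, ((if e1 α = Sum.inr k then (1:ℝ) else 0)
                - if e2 α = Sum.inr k then 1 else 0) * iDt α)) t := by
    simp only [BMpot, cocontent]
    exact ((h1.add h2).add h3).add h4
  -- algebraic identities
  have hrel1 : ∀ α, Lind α * iDt α = -R α * i t α + Δ α := by
    intro α
    have hLa := hL' α
    simp only [hiDtdef, hΔdef, idotF]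
    field_simp
    ring
  have hrel2 : ∀ k, C k * u k = -(p k / v t k)
      - ∑ α, ((if e1 α = Sum.inr k then (1:ℝ) else 0)
          - if e2 α = Sum.inr k then 1 else 0) * i t α := by
    intro k
    have hCk := hC' k
    simp only [hudef, vdotF]
    field_simp
  have helim : ∀ (w : L → ℝ) (c : S ⊕ L),
      (∑ k, (if c = Sum.inr k then (1:ℝ) else 0) * w k) = Sum.elim (fun _ => (0:ℝ)) w c := by
    rintro w (s0 | k0) <;> simp
  have hswap : ∀ x : E → ℝ,
      (∑ k, u k * ∑ α, ((if e1 α = Sum.inr k then (1:ℝ) else 0)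
          - if e2 α = Sum.inr k then 1 else 0) * x α) = ∑ α, x α * D α := by
    intro x
    simp only [Finset.mul_sum]
    rw [Finset.sum_comm]
    refine Finset.sum_congr rfl fun α _ => ?_
    have h1e := helim u (e1 α)
    have h2e := helim u (e2 α)
    have : ∀ k, u k * (((if e1 α = Sum.inr k then (1:ℝ) else 0)
        - if e2 α = Sum.inr k then 1 else 0) * x α)
        = ((if e1 α = Sum.inr k then (1:ℝ) else 0) * u k) * x α
          - ((if e2 α = Sum.inr k then (1:ℝ) else 0) * u k) * x α := fun k => by ring
    rw [Finset.sum_congr rfl fun k _ => this k, Finset.sum_sub_distrib,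
      ← Finset.sum_mul, ← Finset.sum_mul, h1e, h2e]
    simp only [hDdef]
    ring
  have h1atom : (∑ k, p k * (u k / v t k))
      = -(∑ k, C k * u k ^ 2) - ∑ α, i t α * D α := by
    have step : ∀ k, p k * (u k / v t k) = -(C k * u k ^ 2)
        - u k * ∑ α, ((if e1 α = Sum.inr k then (1:ℝ) else 0)
            - if e2 α = Sum.inr k then 1 else 0) * i t α := by
      intro k
      have hk := hrel2 k
      have hvk := hv' k
      field_simp at hk ⊢
      linear_combination (u k) * hk
    rw [Finset.sum_congr rfl fun k _ => step k, Finset.sum_sub_distrib,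
      Finset.sum_neg_distrib, hswap (i t)]
  have h3atom : (∑ α, (τmax - Lind α / R α) * (iDt α * (-R α * iDt α + D α)))
      = -(∑ α, R α * (τmax - Lind α / R α) * iDt α ^ 2)
        + τmax * (∑ α, iDt α * D α) + (∑ α, i t α * D α) - ∑ α, Δ α * D α / R α := by
    have step : ∀ α, (τmax - Lind α / R α) * (iDt α * (-R α * iDt α + D α))
        = (-(R α * (τmax - Lind α / R α) * iDt α ^ 2)
          + τmax * (iDt α * D α) + i t α * D α) - Δ α * D α / R α := by
      intro α
      have hk := hrel1 α
      have hRa := hR' α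
      field_simp
      linear_combination (-(D α)) * hk
    rw [Finset.sum_congr rfl fun α _ => step α, Finset.sum_sub_distrib,
      Finset.sum_add_distrib, Finset.sum_add_distrib, Finset.sum_neg_distrib,
      ← Finset.mul_sum]
  have h4atom : (∑ k, u k * (p k * u k / (v t k) ^ 2
      - ∑ α, ((if e1 α = Sum.inr k then (1:ℝ) else 0)
          - if e2 α = Sum.inr k then 1 else 0) * iDt α))
      = (∑ k, p k * u k ^ 2 / (v t k) ^ 2) - ∑ α, iDt α * D α := by
    have step : ∀ k, u k * (p k * u k / (v t k) ^ 2
        - ∑ α, ((if e1 α = Sum.inr k then (1:ℝ) else 0)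
            - if e2 α = Sum.inr k then 1 else 0) * iDt α)
        = p k * u k ^ 2 / (v t k) ^ 2
          - u k * ∑ α, ((if e1 α = Sum.inr k then (1:ℝ) else 0)
              - if e2 α = Sum.inr k then 1 else 0) * iDt α := fun k => by ring
    rw [Finset.sum_congr rfl fun k _ => step k, Finset.sum_sub_distrib, hswap iDt]
  have htar : (∑ k, (C k - τmax * p k / (v t k) ^ 2) * u k ^ 2)
      = (∑ k, C k * u k ^ 2) - τmax * ∑ k, p k * u k ^ 2 / (v t k) ^ 2 := by
    have step : ∀ k, (C k - τmax * p k / (v t k) ^ 2) * u k ^ 2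
        = C k * u k ^ 2 - τmax * (p k * u k ^ 2 / (v t k) ^ 2) := fun k => by ring
    rw [Finset.sum_congr rfl fun k _ => step k, Finset.sum_sub_distrib, ← Finset.mul_sum]
  convert hP using 1
  rw [htar, h1atom, h3atom, h4atom]
  ring
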